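/- Suppose c ∈ G satisfies ρ(c) ∘ ρ(c) = id and the trace of ρ(c) on V equals 0. Then the trace of ρ(c) ⊗ 1 restricted to ker((J∘K)⊗1 - j·id) ⊆ V ⊗_F E is 0, and likewise the trace of ρ(c) ⊗ 1 restricted to ker((J∘K)⊗1 + j·id) is 0. (Proposition 3.1.5(c) and its concluding assertion: in the quadratic case, if Tr ρ(c) = 0 at the complex conjugation then the 2-dimensional constituent σ is odd.) -/

import Mathlib

open LinearMap Module TensorProduct

set_option maxHeartbeats 1000000

/-- Trace of an involution on a finite-dimensional space over a field of char ≠ 2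
is an integer. -/
lemma trace_involution_int {E : Type*} [Field E] {W : Type*} [AddCommGroup W] [Module E W]
    [Module.Finite E W] (h2 : (2:E) ≠ 0) (B : W →ₗ[E] W) (hB : ∀ x, B (B x) = x) :
    ∃ n : ℤ, LinearMap.trace E W B = n := by
  set R : W →ₗ[E] W := (2:E)⁻¹ • (LinearMap.id + B) with hR
  have hidem : ∀ x, R (R x) = R x := by
    intro x
    simp only [hR, LinearMap.smul_apply, LinearMap.add_apply, id_apply, map_smul, map_add, hB]
    match_scalars <;> (field_simp; try norm_num)
  have hproj : IsProj (range R) R := by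
    refine ⟨fun x => mem_range_self _ _, ?_⟩
    rintro x ⟨y, rfl⟩
    exact hidem y
  have htrR : LinearMap.trace E W R = (finrank E (range R) : E) := hproj.trace
  have hBR : B = (2:E) • R - LinearMap.id := by
    ext x
    simp only [hR, LinearMap.sub_apply, LinearMap.smul_apply, LinearMap.add_apply, id_apply]
    match_scalars <;> (field_simp; try norm_num)
  refine ⟨2 * (finrank E (range R) : ℤ) - (finrank E W : ℤ), ?_⟩
  rw [hBR, map_sub, map_smul, htrR, trace_id, smul_eq_mul]
  push_cast
  ring

/-- Key lemma: trace of the restriction to the `j`-eigenspace vanishes. -/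
lemma aux_trace {F E : Type*} [Field F] [Field E] [Algebra F E]
    (hF : ¬ IsSquare (-1 : F))
    {M : Type*} [AddCommGroup M] [Module E M] [Module.Finite E M]
    (j : E) (hj : j ^ 2 = -1) (hjF : ∀ a : F, algebraMap F E a ≠ j)
    (A T : M →ₗ[E] M)
    (hT2 : ∀ x, T (T x) = -x)
    (hA2 : ∀ x, A (A x) = x)
    (htrA : LinearMap.trace E M A = 0)
    (t0 : F) (ht : LinearMap.trace E M (A ∘ₗ T) = algebraMap F E t0)
    (W : Submodule E M) (hW : W = LinearMap.ker (T - j • LinearMap.id))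
    (h : ∀ x ∈ W, A x ∈ W) :
    LinearMap.trace E ↥W (A.restrict h) = 0 := by
  subst hW
  have h2F : (2:F) ≠ 0 := by
    intro h2
    apply hF
    refine ⟨1, ?_⟩
    have : (-1 : F) = 1 := by linear_combination -h2
    rw [this]; ring
  have h2E : (2:E) ≠ 0 := by
    intro h2
    apply h2F
    apply (algebraMap F E).injective
    rw [map_ofNat, map_zero, h2]
  -- membership in the kernel
  have hmem : ∀ x : M, x ∈ LinearMap.ker (T - j • LinearMap.id) ↔ T x = j • x := by
    intro x
    rw [mem_ker, LinearMap.sub_apply, LinearMap.smul_apply, id_apply, sub_eq_zero]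
  -- the projection onto the eigenspace
  set P : M →ₗ[E] M := (2:E)⁻¹ • (LinearMap.id - j • T) with hP
  have hPmem : ∀ x : M, P x ∈ LinearMap.ker (T - j • LinearMap.id) := by
    intro x
    rw [hmem]
    simp only [hP, LinearMap.smul_apply, LinearMap.sub_apply, id_apply, map_smul, map_sub, hT2]
    match_scalars
    · field_simp
      linear_combination hj
    · field_simp
      try norm_num
      try linear_combination hj
  have hPfix : ∀ x ∈ LinearMap.ker (T - j • LinearMap.id), P x = x := by
    intro x hx
    rw [hmem] at hx
    simp only [hP, LinearMap.smul_apply, LinearMap.sub_apply, id_apply, hx, smul_smul]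
    rw [← sq, hj]
    match_scalars <;> (field_simp; try norm_num)
    
  -- trace of restriction equals trace of A ∘ₗ P
  set ι : ↥(LinearMap.ker (T - j • LinearMap.id)) →ₗ[E] M :=
    (LinearMap.ker (T - j • LinearMap.id)).subtype with hι
  set π : M →ₗ[E] ↥(LinearMap.ker (T - j • LinearMap.id)) :=
    P.codRestrict _ hPmem with hπ
  have hres : A.restrict h = π ∘ₗ (A ∘ₗ ι) := by
    ext x
    simp only [restrict_apply, comp_apply, codRestrict_apply, hι, Submodule.coe_subtype]
    exact (hPfix (A x) (h x x.2)).symm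
  have htrres : LinearMap.trace E _ (A.restrict h) = LinearMap.trace E M (A ∘ₗ P) := by
    rw [hres, trace_comp_comm', comp_assoc]
    congr 1
  -- compute trace of A ∘ₗ P
  have hAP : A ∘ₗ P = (2:E)⁻¹ • (A - j • (A ∘ₗ T)) := by
    ext x
    simp only [hP, comp_apply, LinearMap.smul_apply, LinearMap.sub_apply, id_apply, map_smul, map_sub]
  have htrAP : LinearMap.trace E M (A ∘ₗ P) = -((2:E)⁻¹ * (j * algebraMap F E t0)) := by
    rw [hAP, map_smul, map_sub, map_smul, htrA, ht, smul_eq_mul, smul_eq_mul]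
    ring
  -- integrality
  obtain ⟨n, hn⟩ := trace_involution_int h2E (A.restrict h) (by
    intro x
    apply Subtype.ext
    rw [restrict_coe_apply, restrict_coe_apply]
    exact hA2 x)
  -- conclude t0 = 0
  have ht0 : t0 = 0 := by
    by_contra ht0
    apply hjF (-(2 * ((n : F) / t0)))
    have hn' : LinearMap.trace E _ (A.restrict h) = algebraMap F E (n : F) := by
      rw [hn, map_intCast]
    have key : algebraMap F E (n : F) = -((2:E)⁻¹ * (j * algebraMap F E t0)) := by
      rw [← hn', htrres, htrAP]
    rw [map_intCast] at key
    field_simp [h2E] at key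
    have hs : algebraMap F E t0 ≠ 0 := by
      simpa using (algebraMap F E).injective.ne ht0
    rw [map_neg, map_mul, map_div₀, map_ofNat, map_intCast]
    field_simp
    linear_combination -key
  rw [htrres, htrAP, ht0, map_zero]
  ring

/-- Proposition 3.1.5(c) and its consequence: for quaternion multiplication over a
quadratic field, if `ρ(c)` is an involution of trace `0` on `V`, then the restriction
of `ρ(c)` (after base change to `E = F(j)`) to each `±j`-eigenspace of `J ∘ K` has
trace `0`; i.e. the 2-dimensional constituent `σ` is odd at the complex conjugation. -/
theorem trace_zero_on_eigenspaces_quadratic_case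
    {F E : Type*} [Field F] [Field E] [Algebra F E]
    (hF : ¬ IsSquare (-1 : F)) (hFE : Module.finrank F E = 2)
    (j : E) (hj : j ^ 2 = -1)
    {V : Type*} [AddCommGroup V] [Module F V] [FiniteDimensional F V]
    (hdim : Module.finrank F V = 4)
    {G : Type*} [Group G] (ρ : Representation F G V)
    (N : Subgroup G) (hN : N ≠ ⊤)
    (J K : V →ₗ[F] V)
    (hJ : J ∘ₗ J = -LinearMap.id) (hK : K ∘ₗ K = -LinearMap.id)
    (hJK : J ∘ₗ K = -(K ∘ₗ J))
    (hcJ : ∀ g ∈ N, J ∘ₗ ρ g = ρ g ∘ₗ J)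
    (hcK : ∀ g ∈ N, K ∘ₗ ρ g = ρ g ∘ₗ K)
    (haJ : ∀ g ∉ N, J ∘ₗ ρ g = -(ρ g ∘ₗ J))
    (haK : ∀ g ∉ N, K ∘ₗ ρ g = -(ρ g ∘ₗ K))
    (c : G) (hc : ρ c ∘ₗ ρ c = LinearMap.id)
    (htr : LinearMap.trace F V (ρ c) = 0) :
    ∀ Wp Wm : Submodule E (E ⊗[F] V),
      Wp = LinearMap.ker ((J ∘ₗ K).baseChange E - j • LinearMap.id) →
      Wm = LinearMap.ker ((J ∘ₗ K).baseChange E + j • LinearMap.id) →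
      (∀ x ∈ Wp, (ρ c).baseChange E x ∈ Wp) ∧
      (∀ x ∈ Wm, (ρ c).baseChange E x ∈ Wm) ∧
      (∀ hplus : ∀ x ∈ Wp, (ρ c).baseChange E x ∈ Wp,
        LinearMap.trace E ↥Wp (((ρ c).baseChange E).restrict hplus) = 0) ∧
      (∀ hminus : ∀ x ∈ Wm, (ρ c).baseChange E x ∈ Wm,
        LinearMap.trace E ↥Wm (((ρ c).baseChange E).restrict hminus) = 0) := by
  intro Wp Wm hWp hWm
  -- pointwise versions of hypotheses
  have hJv : ∀ v, J (J v) = -v := fun v => by simpa using LinearMap.ext_iff.mp hJ v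
  have hKv : ∀ v, K (K v) = -v := fun v => by simpa using LinearMap.ext_iff.mp hK v
  have hJKv : ∀ v, J (K v) = -(K (J v)) := fun v => by
    simpa using LinearMap.ext_iff.mp hJK v
  have hKJv : ∀ v, K (J v) = -(J (K v)) := fun v => by rw [hJKv, neg_neg]
  -- T := J ∘ₗ K squares to -1
  have hT2 : (J ∘ₗ K) ∘ₗ (J ∘ₗ K) = -LinearMap.id := by
    ext v
    simp only [comp_apply, LinearMap.neg_apply, id_coe, id_eq]
    rw [hKJv, map_neg, hJv, neg_neg, hKv]
  -- ρ c commutes with J ∘ₗ K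
  have hcomm : ρ c ∘ₗ (J ∘ₗ K) = (J ∘ₗ K) ∘ₗ ρ c := by
    by_cases hcN : c ∈ N
    · have h1 : ∀ v, J (ρ c v) = ρ c (J v) := fun v => by
        simpa using LinearMap.ext_iff.mp (hcJ c hcN) v
      have h2 : ∀ v, K (ρ c v) = ρ c (K v) := fun v => by
        simpa using LinearMap.ext_iff.mp (hcK c hcN) v
      ext v
      simp only [comp_apply]
      rw [h2, h1]
    · have h1 : ∀ v, J (ρ c v) = -(ρ c (J v)) := fun v => by
        simpa using LinearMap.ext_iff.mp (haJ c hcN) v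
      have h2 : ∀ v, K (ρ c v) = -(ρ c (K v)) := fun v => by
        simpa using LinearMap.ext_iff.mp (haK c hcN) v
      ext v
      simp only [comp_apply]
      rw [← neg_neg (ρ c (J (K v))), ← h1, ← map_neg, ← h2]
  -- base change
  set TE := (J ∘ₗ K).baseChange E with hTE
  set AE := (ρ c).baseChange E with hAE
  have hTE2 : ∀ x, TE (TE x) = -x := by
    have : TE ∘ₗ TE = -LinearMap.id := by
      rw [hTE, ← baseChange_comp, hT2, baseChange_neg, baseChange_id]
    intro x
    simpa using LinearMap.ext_iff.mp this x
  have hAE2 : ∀ x, AE (AE x) = x := by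
    have : AE ∘ₗ AE = LinearMap.id := by
      rw [hAE, ← baseChange_comp, hc, baseChange_id]
    intro x
    simpa using LinearMap.ext_iff.mp this x
  have hATE : ∀ x, AE (TE x) = TE (AE x) := by
    have : AE ∘ₗ TE = TE ∘ₗ AE := by
      rw [hAE, hTE, ← baseChange_comp, ← baseChange_comp, hcomm]
    intro x
    simpa using LinearMap.ext_iff.mp this x
  -- invariance of eigenspaces, for any scalar s
  have inv : ∀ (s : E) (x : E ⊗[F] V), x ∈ LinearMap.ker (TE - s • LinearMap.id) →
      AE x ∈ LinearMap.ker (TE - s • LinearMap.id) := by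
    intro s x hx
    rw [mem_ker, LinearMap.sub_apply, LinearMap.smul_apply, id_apply, sub_eq_zero] at hx ⊢
    rw [← hATE, hx, map_smul]
  -- rewrite Wm as a kernel of the (-j)-form
  have hWm' : Wm = LinearMap.ker (TE - (-j) • LinearMap.id) := by
    rw [hWm]
    congr 1
    module
  have hWp' : Wp = LinearMap.ker (TE - j • LinearMap.id) := hWp
  -- j not in the image of F
  have hjF : ∀ a : F, algebraMap F E a ≠ j := by
    intro a ha
    apply hF
    refine ⟨a, ?_⟩
    apply (algebraMap F E).injective
    rw [map_neg, map_one, map_mul, ha, ← sq, hj]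
  have hjF' : ∀ a : F, algebraMap F E a ≠ -j := by
    intro a ha
    apply hjF (-a)
    rw [map_neg, ha, neg_neg]
  -- trace data
  have htrAE : LinearMap.trace E _ AE = 0 := by
    rw [hAE, trace_baseChange, htr, map_zero]
  have htE : LinearMap.trace E _ (AE ∘ₗ TE) =
      algebraMap F E (LinearMap.trace F V (ρ c ∘ₗ (J ∘ₗ K))) := by
    rw [hAE, hTE, ← baseChange_comp, trace_baseChange]
  have hmj : (-j) ^ 2 = -1 := by rw [neg_sq, hj]
  refine ⟨?_, ?_, ?_, ?_⟩
  · intro x hx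
    rw [hWp'] at hx ⊢
    exact inv j x hx
  · intro x hx
    rw [hWm'] at hx ⊢
    exact inv (-j) x hx
  · intro hplus
    exact aux_trace hF j hj hjF AE TE hTE2 hAE2 htrAE _ htE Wp hWp' hplus
  · intro hminus
    exact aux_trace hF (-j) hmj hjF' AE TE hTE2 hAE2 htrAE _ htE Wm hWm' hminus
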